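/- arXiv:1305.7308 — 3 statements merged into one kernel-verified Lean document; each statement's English description precedes it below -/
import Mathlib

section
/- Let f : (0,∞) → (0,∞) be continuous and let H be a complex Hilbert space. Suppose that for every unital positive linear map Φ : B(H⊕H) → B(H) and every strictly positive operator X ∈ B(H⊕H) one has f(Φ(X)) ≤ Φ(f(X)⁻¹)⁻¹. Then f(A∇B) ≤ f(A)♯f(B) for all strictly positive A, B ∈ B(H); indeed the stronger inequality f(A∇B) ≤ f(A)!f(B) holds, where A!B denotes the harmonic mean. -/
noncomputable section

open MeasureTheory

universe u

section Defs

variable {H : Type*} [NormedAddCommGroup H] [InnerProductSpace ℂ H] [CompleteSpace H]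

/-- An operator on a complex Hilbert space is *strictly positive* if it is positive
(in the Loewner order, hence self-adjoint) and invertible. -/
def StrictlyPos (A : H →L[ℂ] H) : Prop := 0 ≤ A ∧ IsUnit A

/-- Real powers of an operator, defined via the continuous functional calculus applied to
`t ↦ t ^ r`. -/
def opPow (A : H →L[ℂ] H) (r : ℝ) : H →L[ℂ] H := cfc (fun x : ℝ => x ^ r) A

/-- The arithmetic mean `A∇B = (A + B)/2`. -/
def arithMean (A B : H →L[ℂ] H) : H →L[ℂ] H := (2 : ℝ)⁻¹ • (A + B)

/-- The geometric mean `A♯B = B^{1/2} (B^{-1/2} A B^{-1/2})^{1/2} B^{1/2}`. -/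
def geomMean (A B : H →L[ℂ] H) : H →L[ℂ] H :=
  opPow B (1/2) * opPow (opPow B (-(1/2)) * A * opPow B (-(1/2))) (1/2) * opPow B (1/2)

/-- The harmonic mean `A!B = ((A⁻¹ + B⁻¹)/2)⁻¹`. -/
def harmMean (A B : H →L[ℂ] H) : H →L[ℂ] H :=
  Ring.inverse ((2 : ℝ)⁻¹ • (Ring.inverse A + Ring.inverse B))

/-- The perspective `g(A, B) = B^{1/2} f(B^{-1/2} A B^{-1/2}) B^{1/2}` of a function
`f : (0,∞) → (0,∞)`, where `f` acts through the continuous functional calculus. -/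
def persp (f : ℝ → ℝ) (A B : H →L[ℂ] H) : H →L[ℂ] H :=
  opPow B (1/2) * cfc f (opPow B (-(1/2)) * A * opPow B (-(1/2))) * opPow B (1/2)

/-- The (real) inner product `⟨Ax, x⟩`, which is a real number for self-adjoint `A`. -/
def rIP (A : H →L[ℂ] H) (x : H) : ℝ := (inner ℂ (A x) x : ℂ).re

end Defs

/-- A function `f : (0,∞) → (0,∞)` is *operator log-convex* if `f(A∇B) ≤ f(A)♯f(B)` for every
complex Hilbert space `H` and all strictly positive `A, B ∈ B(H)`, where `f` acts via the
continuous functional calculus. -/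
def OperatorLogConvex (f : ℝ → ℝ) : Prop :=
  ∀ (H : Type u) [NormedAddCommGroup H] [InnerProductSpace ℂ H] [CompleteSpace H]
    (A B : H →L[ℂ] H), StrictlyPos A → StrictlyPos B →
      cfc f (arithMean A B) ≤ geomMean (cfc f A) (cfc f B)

/-- The non-commutative `f`-divergence functional
`Θ(Ã, B̃) = ∫_T B_t^{1/2} f(B_t^{-1/2} A_t B_t^{-1/2}) B_t^{1/2} dμ(t)` (a Bochner integral). -/
def Theta (f : ℝ → ℝ) {T : Type*} [MeasurableSpace T] (μ : Measure T)
    {H : Type*} [NormedAddCommGroup H] [InnerProductSpace ℂ H] [CompleteSpace H]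
    (A B : T → H →L[ℂ] H) : H →L[ℂ] H :=
  ∫ t, persp f (A t) (B t) ∂μ


section AuxProof

set_option linter.unusedSectionVars false
set_option synthInstance.maxHeartbeats 1000000
set_option maxHeartbeats 1000000

variable {H : Type*} [NormedAddCommGroup H] [InnerProductSpace ℂ H] [CompleteSpace H]

lemma StrictlyPos.isSelfAdjoint' {A : H →L[ℂ] H} (hA : StrictlyPos A) : IsSelfAdjoint A :=
  IsSelfAdjoint.of_nonneg hA.1

lemma StrictlyPos.spectrum_pos {A : H →L[ℂ] H} (hA : StrictlyPos A) :
    ∀ x ∈ spectrum ℝ A, 0 < x := by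
  intro x hx
  rcases (spectrum_nonneg_of_nonneg hA.1 hx).lt_or_eq with h | h
  · exact h
  · exact absurd (h ▸ hx) (spectrum.zero_notMem ℝ hA.2)

lemma StrictlyPos.contOn {f : ℝ → ℝ} (hf : ContinuousOn f (Set.Ioi 0)) {A : H →L[ℂ] H}
    (hA : StrictlyPos A) : ContinuousOn f (spectrum ℝ A) :=
  hf.mono fun x hx => hA.spectrum_pos x hx

lemma StrictlyPos.cfc_sp {f : ℝ → ℝ} {A : H →L[ℂ] H} (hA : StrictlyPos A)
    (hf : ContinuousOn f (spectrum ℝ A)) (hf' : ∀ x ∈ spectrum ℝ A, 0 < f x) :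
    StrictlyPos (cfc f A) :=
  ⟨cfc_nonneg (fun x hx => (hf' x hx).le),
    isUnit_cfc f A hf hA.isSelfAdjoint' (fun x hx => (hf' x hx).ne')⟩

lemma ringInverse_eq {R : Type*} [Ring R] {a b : R} (h1 : a * b = 1) (h2 : b * a = 1) :
    Ring.inverse a = b := by
  have ha : IsUnit a := isUnit_iff_exists.mpr ⟨b, h1, h2⟩
  calc Ring.inverse a = Ring.inverse a * (a * b) := by rw [h1, mul_one]
  _ = (Ring.inverse a * a) * b := by rw [mul_assoc]
  _ = b := by rw [Ring.inverse_mul_cancel _ ha, one_mul]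

open ContinuousLinearMap in
lemma isPositive_smul_nonneg {T : H →L[ℂ] H} {r : ℝ} (hr : 0 ≤ r) (hT : T.IsPositive) :
    (r • T).IsPositive := by
  have hsa : IsSelfAdjoint (r • T) := by
    rw [IsSelfAdjoint, star_smul, star_trivial, hT.isSelfAdjoint.star_eq]
  refine isPositive_def'.mpr ⟨hsa, fun x => ?_⟩
  have : T.reApplyInnerSelf x ≥ 0 := hT.re_inner_nonneg_left x
  show 0 ≤ RCLike.re (inner ℂ ((r • T) x) x : ℂ)
  rw [ContinuousLinearMap.smul_apply]
  have heq : (inner ℂ (r • T x) x : ℂ) = (r : ℂ) * inner ℂ (T x) x := by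
    rw [← Complex.coe_smul, inner_smul_left]; simp
  rw [heq, RCLike.mul_re]
  have h1 : RCLike.re ((r : ℂ)) = r := by simp
  have h2 : RCLike.im ((r : ℂ)) = 0 := by simp
  rw [h1, h2, zero_mul, sub_zero]
  exact mul_nonneg hr this

lemma cancel_left {R : Type*} [Monoid R] {u v : R} (h : u * v = 1) (z : R) :
    u * (v * z) = z := by rw [← mul_assoc, h, one_mul]

lemma rpow_contOn {A : H →L[ℂ] H} (hA : StrictlyPos A) (r : ℝ) :
    ContinuousOn (fun x : ℝ => x ^ r) (spectrum ℝ A) := fun x hx =>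
  (Real.continuousAt_rpow_const x r (Or.inl (hA.spectrum_pos x hx).ne')).continuousWithinAt

lemma opPow_strictlyPos {A : H →L[ℂ] H} (hA : StrictlyPos A) (r : ℝ) :
    StrictlyPos (opPow A r) :=
  hA.cfc_sp (rpow_contOn hA r) (fun x hx => Real.rpow_pos_of_pos (hA.spectrum_pos x hx) r)

lemma opPow_isSelfAdjoint {A : H →L[ℂ] H} (hA : StrictlyPos A) (r : ℝ) :
    IsSelfAdjoint (opPow A r) := (opPow_strictlyPos hA r).isSelfAdjoint'

lemma opPow_mul_opPow {A : H →L[ℂ] H} (hA : StrictlyPos A) (r s : ℝ) :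
    opPow A r * opPow A s = opPow A (r + s) := by
  unfold opPow
  rw [← cfc_mul _ _ A (rpow_contOn hA r) (rpow_contOn hA s)]
  exact cfc_congr fun x hx => (Real.rpow_add (hA.spectrum_pos x hx) r s).symm

lemma opPow_zero {A : H →L[ℂ] H} (hA : StrictlyPos A) : opPow A 0 = 1 := by
  unfold opPow
  rw [show (fun x : ℝ => x ^ (0:ℝ)) = fun _ : ℝ => (1:ℝ) by ext x; exact Real.rpow_zero x]
  exact cfc_const_one ℝ A hA.isSelfAdjoint'

lemma opPow_one {A : H →L[ℂ] H} (hA : StrictlyPos A) : opPow A 1 = A := by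
  unfold opPow
  rw [show (fun x : ℝ => x ^ (1:ℝ)) = fun x : ℝ => x by ext x; exact Real.rpow_one x]
  exact cfc_id ℝ A hA.isSelfAdjoint'

lemma scalar_harm_le_sqrt {x : ℝ} (hx : 0 < x) :
    ((2:ℝ)⁻¹ * (x⁻¹ + 1))⁻¹ ≤ x ^ (1/2 : ℝ) := by
  have hs : 0 < Real.sqrt x := Real.sqrt_pos.mpr hx
  have hs2 : Real.sqrt x * Real.sqrt x = x := Real.mul_self_sqrt hx.le
  rw [← Real.sqrt_eq_rpow]
  have h1 : 0 < (2:ℝ)⁻¹ * (x⁻¹ + 1) := by positivity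
  rw [inv_le_comm₀ h1 hs]
  rw [inv_le_iff_one_le_mul₀ hs]
  nlinarith [mul_nonneg (mul_nonneg (inv_pos.mpr hx).le hs.le) (sq_nonneg (Real.sqrt x - 1)),
    inv_mul_cancel₀ hx.ne', hs2, hs.le]

lemma harm_le_geom {A B : H →L[ℂ] H} (hA : StrictlyPos A) (hB : StrictlyPos B) :
    harmMean A B ≤ geomMean A B := by
  set b := opPow B (1/2) with hbdef
  set b' := opPow B (-(1/2)) with hb'def
  set C := b' * A * b' with hCdef
  have hb : StrictlyPos b := opPow_strictlyPos hB _
  have hb' : StrictlyPos b' := opPow_strictlyPos hB _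
  have hbb' : b * b' = 1 := by
    rw [hbdef, hb'def, opPow_mul_opPow hB]; norm_num; exact opPow_zero hB
  have hb'b : b' * b = 1 := by
    rw [hbdef, hb'def, opPow_mul_opPow hB]; norm_num; exact opPow_zero hB
  have hbb : b * b = B := by
    rw [hbdef, opPow_mul_opPow hB]; norm_num; exact opPow_one hB
  have hCnn : (0:H →L[ℂ] H) ≤ C := by
    have := star_left_conjugate_nonneg hA.1 b'
    rwa [hb'.isSelfAdjoint'.star_eq] at this
  have hC : StrictlyPos C := ⟨hCnn, (hb'.2.mul hA.2).mul hb'.2⟩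
  have hspecC := hC.spectrum_pos
  have hCsa := hC.isSelfAdjoint'
  have hcontInv : ContinuousOn (fun x : ℝ => x⁻¹) (spectrum ℝ C) :=
    ContinuousOn.inv₀ continuousOn_id (fun x hx => (hspecC x hx).ne')
  have hRinvC : Ring.inverse C = cfc (fun x : ℝ => x⁻¹) C := by
    have h := cfc_inv (id : ℝ → ℝ) C (fun x hx => (hspecC x hx).ne') continuousOn_id hCsa
    rw [cfc_id ℝ C hCsa] at h
    exact h.symm
  have hA_eq : A = b * C * b := by
    have : b * C * b = A := by
      rw [hCdef]
      simp only [mul_assoc, cancel_left hbb']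
      rw [hb'b, mul_one]
    exact this.symm
  have hInvA : Ring.inverse A = b' * Ring.inverse C * b' := by
    apply ringInverse_eq
    · rw [hA_eq]
      simp only [mul_assoc, cancel_left hbb', cancel_left (Ring.mul_inverse_cancel C hC.2)]
      exact hbb'
    · rw [hA_eq]
      simp only [mul_assoc, cancel_left hb'b, cancel_left (Ring.inverse_mul_cancel C hC.2)]
      exact hb'b
  have hInvB : Ring.inverse B = b' * 1 * b' := by
    apply ringInverse_eq
    · rw [← hbb]
      simp only [one_mul, mul_assoc, cancel_left hbb']
      exact hbb'
    · rw [← hbb]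
      simp only [one_mul, mul_assoc, cancel_left hb'b]
      exact hb'b
  have hsum : (2:ℝ)⁻¹ • (Ring.inverse A + Ring.inverse B)
      = b' * ((2:ℝ)⁻¹ • (Ring.inverse C + 1)) * b' := by
    rw [hInvA, hInvB, ← add_mul, ← mul_add]
    rw [mul_smul_comm, smul_mul_assoc]
  set g : ℝ → ℝ := fun x => (2:ℝ)⁻¹ * (x⁻¹ + 1) with hgdef
  have hg : ContinuousOn g (spectrum ℝ C) :=
    ContinuousOn.mul continuousOn_const (hcontInv.add continuousOn_const)
  have hg' : ∀ x ∈ spectrum ℝ C, g x ≠ 0 := fun x hx => by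
    have := hspecC x hx; positivity
  have hginv : ContinuousOn (fun x => (g x)⁻¹) (spectrum ℝ C) := hg.inv₀ hg'
  have hDcfc : (2:ℝ)⁻¹ • (Ring.inverse C + 1) = cfc g C := by
    calc (2:ℝ)⁻¹ • (Ring.inverse C + 1)
        = (2:ℝ)⁻¹ • (cfc (fun x : ℝ => x⁻¹) C + cfc (fun _ : ℝ => 1) C) := by
          rw [hRinvC, cfc_const_one ℝ C hCsa]
      _ = (2:ℝ)⁻¹ • cfc (fun x : ℝ => x⁻¹ + 1) C := by
          rw [cfc_add C _ _ hcontInv continuousOn_const]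
      _ = cfc g C := (cfc_smul (2:ℝ)⁻¹ _ C (hcontInv.add continuousOn_const)).symm
  have hgg : cfc g C * cfc (fun x => (g x)⁻¹) C = 1 := by
    rw [← cfc_mul _ _ C hg hginv]
    exact (cfc_congr fun x hx => mul_inv_cancel₀ (hg' x hx)).trans (cfc_const_one ℝ C hCsa)
  have hg'g : cfc (fun x => (g x)⁻¹) C * cfc g C = 1 := by
    rw [← cfc_mul _ _ C hginv hg]
    exact (cfc_congr fun x hx => inv_mul_cancel₀ (hg' x hx)).trans (cfc_const_one ℝ C hCsa)
  have hharm : harmMean A B = b * cfc (fun x => (g x)⁻¹) C * b := by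
    rw [harmMean, hsum, hDcfc]
    apply ringInverse_eq
    · simp only [mul_assoc, cancel_left hb'b, cancel_left hgg]
      exact hb'b
    · simp only [mul_assoc, cancel_left hbb', cancel_left hg'g]
      exact hbb'
  have hmono : cfc (fun x => (g x)⁻¹) C ≤ cfc (fun x : ℝ => x ^ (1/2 : ℝ)) C :=
    cfc_mono (fun x hx => by
      have h := scalar_harm_le_sqrt (hspecC x hx)
      simpa [hgdef] using h) hginv (rpow_contOn hC _)
  calc harmMean A B = b * cfc (fun x => (g x)⁻¹) C * b := hharm
    _ ≤ b * cfc (fun x : ℝ => x ^ (1/2 : ℝ)) C * b := by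
        have := star_left_conjugate_le_conjugate hmono b
        rwa [hb.isSelfAdjoint'.star_eq] at this
    _ = geomMean A B := rfl

open ContinuousLinearMap in
def inlL : H →L[ℂ] WithLp 2 (H × H) :=
  (WithLp.prodContinuousLinearEquiv 2 ℂ H H).symm.toContinuousLinearMap ∘L inl ℂ H H

open ContinuousLinearMap in
def inrL : H →L[ℂ] WithLp 2 (H × H) :=
  (WithLp.prodContinuousLinearEquiv 2 ℂ H H).symm.toContinuousLinearMap ∘L inr ℂ H H

open ContinuousLinearMap in
def fstL : WithLp 2 (H × H) →L[ℂ] H :=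
  fst ℂ H H ∘L (WithLp.prodContinuousLinearEquiv 2 ℂ H H).toContinuousLinearMap

open ContinuousLinearMap in
def sndL : WithLp 2 (H × H) →L[ℂ] H :=
  snd ℂ H H ∘L (WithLp.prodContinuousLinearEquiv 2 ℂ H H).toContinuousLinearMap

@[simp] lemma fstL_apply (x : WithLp 2 (H × H)) : fstL x = x.fst := rfl
@[simp] lemma sndL_apply (x : WithLp 2 (H × H)) : sndL x = x.snd := rfl
@[simp] lemma inlL_apply_fst (x : H) : (inlL x).fst = x := rfl
@[simp] lemma inlL_apply_snd (x : H) : (inlL x).snd = 0 := rfl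
@[simp] lemma inrL_apply_fst (x : H) : (inrL x).fst = 0 := rfl
@[simp] lemma inrL_apply_snd (x : H) : (inrL x).snd = x := rfl

lemma withlp_ext {x y : WithLp 2 (H × H)} (h1 : x.fst = y.fst) (h2 : x.snd = y.snd) : x = y :=
  WithLp.ofLp_injective 2 (Prod.ext h1 h2)

open ContinuousLinearMap in
lemma adjoint_inlL : adjoint (inlL (H := H)) = fstL := by
  symm
  rw [eq_adjoint_iff]
  intro x y
  simp [WithLp.prod_inner_apply]

open ContinuousLinearMap in
lemma adjoint_inrL : adjoint (inrL (H := H)) = sndL := by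
  symm
  rw [eq_adjoint_iff]
  intro x y
  simp [WithLp.prod_inner_apply]

open ContinuousLinearMap in
lemma adjoint_fstL : adjoint (fstL (H := H)) = inlL := by
  rw [← adjoint_inlL, adjoint_adjoint]

open ContinuousLinearMap in
lemma adjoint_sndL : adjoint (sndL (H := H)) = inrL := by
  rw [← adjoint_inrL, adjoint_adjoint]

def diagL (X Y : H →L[ℂ] H) : WithLp 2 (H × H) →L[ℂ] WithLp 2 (H × H) :=
  inlL ∘L X ∘L fstL + inrL ∘L Y ∘L sndL

@[simp] lemma diagL_apply_fst (X Y : H →L[ℂ] H) (x : WithLp 2 (H × H)) :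
    (diagL X Y x).fst = X x.fst := by
  simp [diagL]

@[simp] lemma diagL_apply_snd (X Y : H →L[ℂ] H) (x : WithLp 2 (H × H)) :
    (diagL X Y x).snd = Y x.snd := by
  simp [diagL]

lemma diagL_one : diagL (1 : H →L[ℂ] H) 1 = 1 := by
  refine ContinuousLinearMap.ext fun x => withlp_ext ?_ ?_ <;> simp <;> rfl

lemma diagL_mul (X Y X' Y' : H →L[ℂ] H) :
    diagL X Y * diagL X' Y' = diagL (X * X') (Y * Y') := by
  refine ContinuousLinearMap.ext fun x => withlp_ext ?_ ?_ <;>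
    simp [ContinuousLinearMap.mul_apply]

lemma diagL_add (X Y X' Y' : H →L[ℂ] H) :
    diagL X Y + diagL X' Y' = diagL (X + X') (Y + Y') := by
  refine ContinuousLinearMap.ext fun x => withlp_ext ?_ ?_ <;>
    simp

open ContinuousLinearMap in
lemma diagL_star (X Y : H →L[ℂ] H) :
    star (diagL X Y) = diagL (star X) (star Y) := by
  simp only [star_eq_adjoint, diagL, map_add, adjoint_comp, adjoint_inlL, adjoint_fstL,
    adjoint_inrL, adjoint_sndL]
  simp [ContinuousLinearMap.comp_assoc]


def diagHom : ((H →L[ℂ] H) × (H →L[ℂ] H)) →⋆ₐ[ℂ] (WithLp 2 (H × H) →L[ℂ] WithLp 2 (H × H)) where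
  toFun P := diagL P.1 P.2
  map_one' := diagL_one
  map_mul' P Q := (diagL_mul P.1 P.2 Q.1 Q.2).symm
  map_zero' := by
    refine ContinuousLinearMap.ext fun x => withlp_ext ?_ ?_ <;> simp <;> rfl
  map_add' P Q := (diagL_add P.1 P.2 Q.1 Q.2).symm
  commutes' c := by
    refine ContinuousLinearMap.ext fun x => withlp_ext ?_ ?_ <;>
      simp [Algebra.algebraMap_eq_smul_one] <;> rfl
  map_star' P := (diagL_star P.1 P.2).symm

lemma continuous_diagHom : Continuous (diagHom (H := H)) := by
  show Continuous fun P : (H →L[ℂ] H) × (H →L[ℂ] H) => diagL P.1 P.2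
  unfold diagL
  fun_prop

lemma isUnit_prod {R S : Type*} [Ring R] [Ring S] {a : R} {b : S} (ha : IsUnit a)
    (hb : IsUnit b) : IsUnit ((a, b) : R × S) := by
  rw [isUnit_iff_exists] at *
  obtain ⟨a', ha1, ha2⟩ := ha
  obtain ⟨b', hb1, hb2⟩ := hb
  exact ⟨(a', b'), Prod.ext ha1 hb1, Prod.ext ha2 hb2⟩

lemma spectrum_prod_subset (A B : H →L[ℂ] H) :
    spectrum ℝ ((A, B) : (H →L[ℂ] H) × (H →L[ℂ] H)) ⊆ spectrum ℝ A ∪ spectrum ℝ B := by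
  intro x hx
  by_contra hc
  simp only [Set.mem_union, not_or, spectrum.notMem_iff] at hc
  rw [spectrum.mem_iff] at hx
  exact hx (isUnit_prod hc.1 hc.2)

lemma isSelfAdjoint_prod {A B : H →L[ℂ] H} (hA : IsSelfAdjoint A) (hB : IsSelfAdjoint B) :
    IsSelfAdjoint ((A, B) : (H →L[ℂ] H) × (H →L[ℂ] H)) :=
  Prod.ext hA.star_eq hB.star_eq

instance prodCFCReal :
    ContinuousFunctionalCalculus ℝ ((H →L[ℂ] H) × (H →L[ℂ] H)) IsSelfAdjoint :=
  IsSelfAdjoint.instContinuousFunctionalCalculus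

lemma cfc_prod (f : ℝ → ℝ) (A B : H →L[ℂ] H) (hA : IsSelfAdjoint A) (hB : IsSelfAdjoint B)
    (hf : ContinuousOn f (spectrum ℝ ((A, B) : (H →L[ℂ] H) × (H →L[ℂ] H)))) :
    cfc f ((A, B) : (H →L[ℂ] H) × (H →L[ℂ] H)) = (cfc f A, cfc f B) := by
  have hsa : IsSelfAdjoint ((A, B) : (H →L[ℂ] H) × (H →L[ℂ] H)) := isSelfAdjoint_prod hA hB
  have h1 := StarAlgHomClass.map_cfc (S := ℂ) (StarAlgHom.fst ℂ (H →L[ℂ] H) (H →L[ℂ] H)) f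
    ((A, B) : (H →L[ℂ] H) × (H →L[ℂ] H)) hf continuous_fst hsa hA
  have h2 := StarAlgHomClass.map_cfc (S := ℂ) (StarAlgHom.snd ℂ (H →L[ℂ] H) (H →L[ℂ] H)) f
    ((A, B) : (H →L[ℂ] H) × (H →L[ℂ] H)) hf continuous_snd hsa hB
  exact Prod.ext (by simpa using h1) (by simpa using h2)

lemma cfc_diagL (f : ℝ → ℝ) (A B : H →L[ℂ] H) (hA : IsSelfAdjoint A) (hB : IsSelfAdjoint B)
    (hf : ContinuousOn f (spectrum ℝ ((A, B) : (H →L[ℂ] H) × (H →L[ℂ] H)))) :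
    cfc f (diagL A B) = diagL (cfc f A) (cfc f B) := by
  have hsa : IsSelfAdjoint ((A, B) : (H →L[ℂ] H) × (H →L[ℂ] H)) := isSelfAdjoint_prod hA hB
  have hsa2 : IsSelfAdjoint (diagHom ((A, B) : (H →L[ℂ] H) × (H →L[ℂ] H))) := by
    rw [IsSelfAdjoint, ← map_star]
    exact congrArg _ hsa.star_eq
  have := StarAlgHomClass.map_cfc (S := ℂ) (diagHom (H := H)) f
    ((A, B) : (H →L[ℂ] H) × (H →L[ℂ] H)) hf continuous_diagHom hsa hsa2
  rw [cfc_prod f A B hA hB hf] at this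
  exact this.symm

open ContinuousLinearMap in
@[simp] lemma fstL_comp_inlL : fstL ∘L inlL = (1 : H →L[ℂ] H) := by
  ext x; rfl

open ContinuousLinearMap in
@[simp] lemma sndL_comp_inrL : sndL ∘L inrL = (1 : H →L[ℂ] H) := by
  ext x; rfl

open ContinuousLinearMap in
def PhiMap : (WithLp 2 (H × H) →L[ℂ] WithLp 2 (H × H)) →ₗ[ℂ] (H →L[ℂ] H) where
  toFun X := (2:ℝ)⁻¹ • (fstL ∘L X ∘L inlL + sndL ∘L X ∘L inrL)
  map_add' X Y := by
    simp only [add_comp, comp_add]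
    rw [← smul_add]
    congr 1
    abel
  map_smul' c X := by
    simp only [smul_comp, comp_smulₛₗ, RingHom.id_apply]
    rw [← smul_add, smul_comm]

lemma PhiMap_apply (X : WithLp 2 (H × H) →L[ℂ] WithLp 2 (H × H)) :
    PhiMap X = (2:ℝ)⁻¹ • (fstL ∘L X ∘L inlL + sndL ∘L X ∘L inrL) := rfl

lemma PhiMap_one : PhiMap (1 : WithLp 2 (H × H) →L[ℂ] WithLp 2 (H × H)) = 1 := by
  rw [PhiMap_apply]
  have h1 : fstL ∘L (1 : WithLp 2 (H × H) →L[ℂ] WithLp 2 (H × H)) ∘L inlL = (1 : H →L[ℂ] H) := by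
    ext x; rfl
  have h2 : sndL ∘L (1 : WithLp 2 (H × H) →L[ℂ] WithLp 2 (H × H)) ∘L inrL = (1 : H →L[ℂ] H) := by
    ext x; rfl
  rw [h1, h2, ← two_smul ℝ (1 : H →L[ℂ] H), smul_smul]
  norm_num

lemma PhiMap_diagL (X Y : H →L[ℂ] H) : PhiMap (diagL X Y) = (2:ℝ)⁻¹ • (X + Y) := by
  rw [PhiMap_apply]
  congr 1
  have h1 : fstL ∘L diagL X Y ∘L inlL = X := by
    ext x
    simp
  have h2 : sndL ∘L diagL X Y ∘L inrL = Y := by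
    ext x
    simp
  rw [h1, h2]

open ContinuousLinearMap in
lemma PhiMap_pos {X : WithLp 2 (H × H) →L[ℂ] WithLp 2 (H × H)} (hX : 0 ≤ X) : 0 ≤ PhiMap X := by
  rw [PhiMap_apply, nonneg_iff_isPositive]
  rw [nonneg_iff_isPositive] at hX
  have h1 : (fstL ∘L X ∘L inlL).IsPositive := by
    have := hX.conj_adjoint (fstL (H := H))
    rwa [adjoint_fstL] at this
  have h2 : (sndL ∘L X ∘L inrL).IsPositive := by
    have := hX.conj_adjoint (sndL (H := H))
    rwa [adjoint_sndL] at this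
  have hsum := h1.add h2
  refine isPositive_def'.mpr ⟨?_, ?_⟩
  · rw [IsSelfAdjoint, star_smul, star_trivial, hsum.isSelfAdjoint.star_eq]
  · intro x
    show 0 ≤ RCLike.re (inner ℂ (((2:ℝ)⁻¹ • (fstL ∘L X ∘L inlL + sndL ∘L X ∘L inrL)) x) x : ℂ)
    rw [ContinuousLinearMap.smul_apply]
    have heq : (inner ℂ ((2:ℝ)⁻¹ • (fstL ∘L X ∘L inlL + sndL ∘L X ∘L inrL) x) x : ℂ)
        = ((2:ℝ)⁻¹ : ℂ) * inner ℂ ((fstL ∘L X ∘L inlL + sndL ∘L X ∘L inrL) x) x := by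
      rw [← Complex.coe_smul, inner_smul_left, Complex.conj_ofReal]; norm_num [inner_add_left]
    rw [heq, RCLike.mul_re]
    have e1 : RCLike.re (((2:ℝ)⁻¹ : ℂ)) = (2:ℝ)⁻¹ := by simp
    have e2 : RCLike.im (((2:ℝ)⁻¹ : ℂ)) = 0 := by simp
    rw [e1, e2, zero_mul, sub_zero]
    exact mul_nonneg (by norm_num) (hsum.re_inner_nonneg_left x)


open ContinuousLinearMap in
lemma diagL_strictlyPos {A B : H →L[ℂ] H} (hA : StrictlyPos A) (hB : StrictlyPos B) :
    StrictlyPos (diagL A B) := by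
  constructor
  · rw [nonneg_iff_isPositive]
    have h1 : (inlL ∘L A ∘L fstL).IsPositive := by
      have := ((nonneg_iff_isPositive A).mp hA.1).adjoint_conj (fstL (H := H))
      rwa [adjoint_fstL] at this
    have h2 : (inrL ∘L B ∘L sndL).IsPositive := by
      have := ((nonneg_iff_isPositive B).mp hB.1).adjoint_conj (sndL (H := H))
      rwa [adjoint_sndL] at this
    exact h1.add h2
  · exact (isUnit_prod hA.2 hB.2).map (diagHom (H := H))

lemma ringInverse_diagL {X Y : H →L[ℂ] H} (hX : IsUnit X) (hY : IsUnit Y) :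
    Ring.inverse (diagL X Y) = diagL (Ring.inverse X) (Ring.inverse Y) := by
  apply ringInverse_eq
  · rw [diagL_mul, Ring.mul_inverse_cancel X hX, Ring.mul_inverse_cancel Y hY, diagL_one]
  · rw [diagL_mul, Ring.inverse_mul_cancel X hX, Ring.inverse_mul_cancel Y hY, diagL_one]

end AuxProof

theorem stmt_3 (f : ℝ → ℝ) (hf_cont : ContinuousOn f (Set.Ioi 0))
    (hf_pos : ∀ x : ℝ, 0 < x → 0 < f x)
    {H : Type*} [NormedAddCommGroup H] [InnerProductSpace ℂ H] [CompleteSpace H]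
    (h : ∀ Φ : (WithLp 2 (H × H) →L[ℂ] WithLp 2 (H × H)) →ₗ[ℂ] (H →L[ℂ] H),
      (∀ X : WithLp 2 (H × H) →L[ℂ] WithLp 2 (H × H), 0 ≤ X → 0 ≤ Φ X) → Φ 1 = 1 →
        ∀ X : WithLp 2 (H × H) →L[ℂ] WithLp 2 (H × H), StrictlyPos X →
          cfc f (Φ X) ≤ Ring.inverse (Φ (Ring.inverse (cfc f X))))
    (A B : H →L[ℂ] H) (hA : StrictlyPos A) (hB : StrictlyPos B) :
    cfc f (arithMean A B) ≤ harmMean (cfc f A) (cfc f B) ∧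
      cfc f (arithMean A B) ≤ geomMean (cfc f A) (cfc f B) := by
  have hfA : StrictlyPos (cfc f A) :=
    hA.cfc_sp (hA.contOn hf_cont) (fun x hx => hf_pos x (hA.spectrum_pos x hx))
  have hfB : StrictlyPos (cfc f B) :=
    hB.cfc_sp (hB.contOn hf_cont) (fun x hx => hf_pos x (hB.spectrum_pos x hx))
  have hprod : ContinuousOn f (spectrum ℝ ((A, B) : (H →L[ℂ] H) × (H →L[ℂ] H))) :=
    hf_cont.mono ((spectrum_prod_subset A B).trans (Set.union_subset
      (fun x hx => hA.spectrum_pos x hx) (fun x hx => hB.spectrum_pos x hx)))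
  have hXsp : StrictlyPos (diagL A B) := diagL_strictlyPos hA hB
  have key := h PhiMap (fun X hX => PhiMap_pos hX) PhiMap_one (diagL A B) hXsp
  have hcfcX : cfc f (diagL A B) = diagL (cfc f A) (cfc f B) :=
    cfc_diagL f A B hA.isSelfAdjoint' hB.isSelfAdjoint' hprod
  rw [hcfcX, ringInverse_diagL hfA.2 hfB.2, PhiMap_diagL, PhiMap_diagL] at key
  have hkey1 : cfc f (arithMean A B) ≤ harmMean (cfc f A) (cfc f B) := key
  exact ⟨hkey1, hkey1.trans (harm_le_geom hfA hfB)⟩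
end
end

section
/- Let H be a complex Hilbert space and let X₁, …, Xₙ and Y₁, …, Yₙ be strictly positive operators in B(H). Then ∑_{i=1}^n Xᵢ♯Yᵢ ≤ (∑_{i=1}^n Xᵢ) ♯ (∑_{i=1}^n Yᵢ) in the Loewner order (the operator Cauchy–Schwarz inequality for the geometric mean). -/
noncomputable section

open MeasureTheory

universe u

section Aux

variable {H : Type*} [NormedAddCommGroup H] [InnerProductSpace ℂ H] [CompleteSpace H]

namespace GeomAux

lemma sp_sa {A : H →L[ℂ] H} (hA : StrictlyPos A) : IsSelfAdjoint A :=
  .of_nonneg hA.1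

lemma sp_spectrum_pos {A : H →L[ℂ] H} (hA : StrictlyPos A) :
    ∀ x ∈ spectrum ℝ A, 0 < x := by
  intro x hx
  rcases ((StarOrderedRing.nonneg_iff_spectrum_nonneg (R := ℝ) A (sp_sa hA)).mp hA.1 x hx).lt_or_eq
    with h | h
  · exact h
  · exact absurd (h ▸ hx) (spectrum.zero_notMem ℝ hA.2)

lemma contOn_rpow {A : H →L[ℂ] H} (hA : StrictlyPos A) (r : ℝ) :
    ContinuousOn (fun x : ℝ => x ^ r) (spectrum ℝ A) := fun x hx =>
  (Real.continuousAt_rpow_const x r (Or.inl (sp_spectrum_pos hA x hx).ne')).continuousWithinAt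

lemma opPow_sa (A : H →L[ℂ] H) (r : ℝ) : IsSelfAdjoint (opPow A r) := cfc_predicate _ _

lemma opPow_mul {A : H →L[ℂ] H} (hA : StrictlyPos A) (r s : ℝ) :
    opPow A r * opPow A s = opPow A (r + s) := by
  unfold opPow
  rw [← cfc_mul _ _ A (contOn_rpow hA r) (contOn_rpow hA s)]
  exact cfc_congr fun x hx => (Real.rpow_add (sp_spectrum_pos hA x hx) r s).symm

lemma opPow_zero {A : H →L[ℂ] H} (hA : StrictlyPos A) : opPow A 0 = 1 := by
  unfold opPow
  rw [cfc_congr (g := fun _ => (1:ℝ)) fun x _ => Real.rpow_zero x]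
  exact cfc_const_one ℝ A (sp_sa hA)

lemma opPow_one {A : H →L[ℂ] H} (hA : StrictlyPos A) : opPow A 1 = A := by
  unfold opPow
  rw [cfc_congr (g := fun x => x) fun x _ => Real.rpow_one x]
  exact cfc_id' ℝ A (sp_sa hA)

lemma opPow_nonneg {A : H →L[ℂ] H} (hA : StrictlyPos A) (r : ℝ) : 0 ≤ opPow A r :=
  cfc_nonneg fun x hx => Real.rpow_nonneg (sp_spectrum_pos hA x hx).le r

lemma opPow_isUnit {A : H →L[ℂ] H} (hA : StrictlyPos A) (r : ℝ) : IsUnit (opPow A r) := by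
  have h1 : opPow A r * opPow A (-r) = 1 := by
    rw [opPow_mul hA, add_neg_cancel, opPow_zero hA]
  have h2 : opPow A (-r) * opPow A r = 1 := by
    rw [opPow_mul hA, neg_add_cancel, opPow_zero hA]
  exact ⟨⟨_, _, h1, h2⟩, rfl⟩

lemma opPow_strictlyPos {A : H →L[ℂ] H} (hA : StrictlyPos A) (r : ℝ) :
    StrictlyPos (opPow A r) := ⟨opPow_nonneg hA r, opPow_isUnit hA r⟩

lemma sa_inner {T : H →L[ℂ] H} (hT : IsSelfAdjoint T) (x y : H) :
    (inner ℂ (T x) y : ℂ) = inner ℂ x (T y) := by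
  conv_lhs => rw [← ContinuousLinearMap.isSelfAdjoint_iff'.mp hT]
  exact ContinuousLinearMap.adjoint_inner_left T y x

end GeomAux

namespace GeomAux

def QF (A G B : H →L[ℂ] H) : Prop :=
  ∀ u v : H, 0 ≤ (inner ℂ (A u) u : ℂ).re + 2 * (inner ℂ (G u) v : ℂ).re + (inner ℂ (B v) v : ℂ).re

variable {A B : H →L[ℂ] H}

lemma hbbi (hB : StrictlyPos B) : opPow B (1/2) * opPow B (-(1/2)) = 1 := by
  rw [opPow_mul hB, add_neg_cancel, opPow_zero hB]

lemma hbib (hB : StrictlyPos B) : opPow B (-(1/2)) * opPow B (1/2) = 1 := by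
  rw [opPow_mul hB, neg_add_cancel, opPow_zero hB]

lemma hC_sp (hA : StrictlyPos A) (hB : StrictlyPos B) :
    StrictlyPos (opPow B (-(1/2)) * A * opPow B (-(1/2))) := by
  constructor
  · have := star_left_conjugate_nonneg hA.1 (opPow B (-(1/2)))
    rwa [(opPow_sa B (-(1/2))).star_eq] at this
  · exact ((opPow_isUnit hB _).mul hA.2).mul (opPow_isUnit hB _)

lemma hA_conj (hA : StrictlyPos A) (hB : StrictlyPos B) :
    opPow B (1/2) * (opPow B (-(1/2)) * A * opPow B (-(1/2))) * opPow B (1/2) = A := by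
  calc opPow B (1/2) * (opPow B (-(1/2)) * A * opPow B (-(1/2))) * opPow B (1/2)
      = (opPow B (1/2) * opPow B (-(1/2))) * A * (opPow B (-(1/2)) * opPow B (1/2)) := by
        simp only [mul_assoc]
    _ = A := by rw [hbbi hB, hbib hB, one_mul, mul_one]

lemma qf_geomMean (hA : StrictlyPos A) (hB : StrictlyPos B) : QF A (geomMean A B) B := by
  intro u v
  set b := opPow B (1/2) with hb
  set bi := opPow B (-(1/2)) with hbi
  set C := bi * A * bi with hC
  have hCsp : StrictlyPos C := hC_sp hA hB
  set S := opPow C (1/2) with hS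
  have hSS : S * S = C := by
    rw [hS, opPow_mul hCsp]; norm_num [opPow_one hCsp]
  have hAeq : A = b * C * b := (hA_conj hA hB).symm
  have h1 : (inner ℂ (A u) u : ℂ).re = ‖S (b u)‖ ^ 2 := by
    conv_lhs => rw [hAeq]
    rw [show (b * C * b) u = b (C (b u)) from rfl,
      sa_inner (opPow_sa B (1/2)) (C (b u)) u,
      show C (b u) = S (S (b u)) by rw [← hSS]; rfl,
      sa_inner (opPow_sa C (1/2)) (S (b u)) (b u)]
    exact inner_self_eq_norm_sq (𝕜 := ℂ) (S (b u))
  have h2 : (inner ℂ ((geomMean A B) u) v : ℂ).re = (inner ℂ (S (b u)) (b v) : ℂ).re := by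
    rw [show (geomMean A B) u = b (S (b u)) from rfl,
      sa_inner (opPow_sa B (1/2)) (S (b u)) v]
  have hBb : B = b * b := by
    rw [hb, opPow_mul hB]; norm_num [opPow_one hB]
  have h3 : (inner ℂ (B v) v : ℂ).re = ‖b v‖ ^ 2 := by
    conv_lhs => rw [hBb]
    rw [show (b * b) v = b (b v) from rfl, sa_inner (opPow_sa B (1/2)) (b v) v]
    exact inner_self_eq_norm_sq (𝕜 := ℂ) (b v)
  rw [h1, h2, h3]
  have h4 := norm_add_sq (𝕜 := ℂ) (S (b u)) (b v)
  simp only [RCLike.re_to_complex] at h4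
  rw [← h4]
  positivity

end GeomAux

namespace GeomAux

lemma mul_opPow {C : H →L[ℂ] H} (hC : StrictlyPos C) (s : ℝ) :
    C * opPow C s = opPow C (1 + s) := by
  nth_rw 1 [← opPow_one hC]
  rw [opPow_mul hC]

lemma qf_sum {n : ℕ} {X Y G : Fin n → H →L[ℂ] H} (h : ∀ i, QF (X i) (G i) (Y i)) :
    QF (∑ i, X i) (∑ i, G i) (∑ i, Y i) := by
  intro u v
  have h0 : 0 ≤ ∑ i, ((inner ℂ (X i u) u : ℂ).re + 2 * (inner ℂ (G i u) v : ℂ).re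
      + (inner ℂ (Y i v) v : ℂ).re) := Finset.sum_nonneg fun i _ => h i u v
  simpa [ContinuousLinearMap.sum_apply, sum_inner, Complex.re_sum, Finset.sum_add_distrib,
    Finset.mul_sum] using h0

end GeomAux

namespace GeomAux

lemma le_geomMean_of_qf [Nontrivial H] {A B X : H →L[ℂ] H} (hA : StrictlyPos A)
    (hB : StrictlyPos B) (hX0 : 0 ≤ X) (hqf : QF A X B) : X ≤ geomMean A B := by
  set b := opPow B (1/2) with hb
  set bi := opPow B (-(1/2)) with hbi
  set C := bi * A * bi with hC
  have hCsp : StrictlyPos C := by rw [hC, hbi]; exact hC_sp hA hB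
  set S := opPow C (1/2) with hS
  set Y := bi * X * bi with hY
  have hbisa : IsSelfAdjoint bi := by rw [hbi]; exact opPow_sa B _
  have hbsa : IsSelfAdjoint b := by rw [hb]; exact opPow_sa B _
  have hXsa : IsSelfAdjoint X := .of_nonneg hX0
  have hY0 : 0 ≤ Y := by
    have := star_left_conjugate_nonneg hX0 bi
    rwa [hbisa.star_eq] at this
  have hYsa : IsSelfAdjoint Y := .of_nonneg hY0
  have e1 : bi * b = 1 := by rw [hb, hbi]; exact hbib hB
  have e2 : b * bi = 1 := by rw [hb, hbi]; exact hbbi hB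
  have eS : S * S = C := by
    rw [hS, opPow_mul hCsp, show (1/2 + 1/2 : ℝ) = 1 by norm_num, opPow_one hCsp]
  have hBb : B = b * b := by
    rw [hb, opPow_mul hB, show (1/2 + 1/2 : ℝ) = 1 by norm_num, opPow_one hB]
  have hbiB : bi * B * bi = 1 := by
    rw [hBb, show bi * (b * b) * bi = (bi * b) * (b * bi) by simp only [mul_assoc], e1, e2,
      one_mul]
  -- Step 1 : Y * Y ≤ C
  have hY2 : Y * Y ≤ C := by
    have hYYsa : IsSelfAdjoint (Y * Y) := by
      have := IsSelfAdjoint.star_mul_self Y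
      rwa [hYsa.star_eq] at this
    rw [ContinuousLinearMap.le_def]
    refine ⟨((sp_sa hCsp).sub hYYsa).isSymmetric, fun w => ?_⟩
    have hq := hqf (bi w) (-(bi (Y w)))
    have t1 : (inner ℂ (A (bi w)) (bi w) : ℂ) = inner ℂ (C w) w := by
      rw [show C w = bi (A (bi w)) from by rw [hC]; rfl, sa_inner hbisa (A (bi w)) w]
    have t2 : (inner ℂ (X (bi w)) (-(bi (Y w))) : ℂ).re = -‖Y w‖ ^ 2 := by
      rw [inner_neg_right, ← sa_inner hbisa (X (bi w)) (Y w),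
        show bi (X (bi w)) = Y w from by rw [hY]; rfl]
      rw [Complex.neg_re]
      exact neg_inj.mpr (inner_self_eq_norm_sq (𝕜 := ℂ) (Y w))
    have t3 : (inner ℂ (B (-(bi (Y w)))) (-(bi (Y w))) : ℂ) = inner ℂ (Y w) (Y w) := by
      rw [map_neg, inner_neg_neg, ← sa_inner hbisa (B (bi (Y w))) (Y w),
        show bi (B (bi (Y w))) = (bi * B * bi) (Y w) from rfl, hbiB]
      rfl
    rw [t1] at hq
    rw [t2] at hq
    rw [t3] at hq
    have t4 : ContinuousLinearMap.reApplyInnerSelf (C - Y * Y) w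
        = (inner ℂ (C w) w : ℂ).re - (inner ℂ (Y w) (Y w) : ℂ).re := by
      simp [ContinuousLinearMap.reApplyInnerSelf, ContinuousLinearMap.sub_apply,
        inner_sub_left, show (Y * Y) w = Y (Y w) from rfl, sa_inner hYsa (Y w) w]
    rw [t4]
    have t5 : (inner ℂ (Y w) (Y w) : ℂ).re = ‖Y w‖ ^ 2 := inner_self_eq_norm_sq (𝕜 := ℂ) (Y w)
    rw [t5]
    nlinarith [hq]
  -- Step 2 : norm / spectral radius argument
  set q := opPow C (-(1/4)) with hq4
  set r := opPow C (1/4) with hr4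
  have hqsa : IsSelfAdjoint q := by rw [hq4]; exact opPow_sa _ _
  have hrsa : IsSelfAdjoint r := by rw [hr4]; exact opPow_sa _ _
  have hrq : r * q = 1 := by
    rw [hr4, hq4, opPow_mul hCsp, show (1/4 + -(1/4) : ℝ) = 0 by norm_num, opPow_zero hCsp]
  have hqr : q * r = 1 := by
    rw [hr4, hq4, opPow_mul hCsp, show (-(1/4) + 1/4 : ℝ) = 0 by norm_num, opPow_zero hCsp]
  have hqq : q * q = opPow C (-(1/2)) := by
    rw [hq4, opPow_mul hCsp, show (-(1/4) + -(1/4) : ℝ) = -(1/2) by norm_num]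
  have hCqq : (q * q) * C * (q * q) = 1 := by
    rw [hqq, mul_assoc, mul_opPow hCsp, opPow_mul hCsp,
      show (-(1/2) + (1 + -(1/2)) : ℝ) = 0 by norm_num, opPow_zero hCsp]
  set w' := Y * (q * q) with hw'
  have hsw : star w' * w' = (q * q) * (Y * Y) * (q * q) := by
    simp only [hw', star_mul, hYsa.star_eq, hqsa.star_eq, mul_assoc]
  have hsw1 : star w' * w' ≤ 1 := by
    have h5 := star_left_conjugate_le_conjugate hY2 (q * q)
    rw [show star (q * q) = q * q by simp only [star_mul, hqsa.star_eq]] at h5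
    rw [hsw]
    exact h5.trans_eq hCqq
  have hw0 : 0 ≤ star w' * w' := star_mul_self_nonneg w'
  have hwn : ‖w'‖ ≤ 1 := by
    have h6 : ‖star w' * w'‖ ≤ 1 := (CStarAlgebra.norm_le_one_iff_of_nonneg _ hw0).mpr hsw1
    rw [CStarRing.norm_star_mul_self] at h6
    nlinarith [norm_nonneg w']
  have hcsa : IsSelfAdjoint (q * Y * q) := by
    show star _ = _
    simp only [star_mul, hYsa.star_eq, hqsa.star_eq, mul_assoc]
  have hc0 : 0 ≤ q * Y * q := by
    have := star_left_conjugate_nonneg hY0 q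
    rwa [hqsa.star_eq] at this
  obtain ⟨U, hU⟩ := opPow_isUnit hCsp (-(1/4))
  have hUq : (U : H →L[ℂ] H) = q := by rw [hq4]; exact hU
  have hconj : q * Y * q = ↑U * w' * ↑U⁻¹ := by
    have h7 : q * ↑U⁻¹ = 1 := by rw [← hUq]; exact U.mul_inv
    rw [hw', hUq]
    simp only [mul_assoc, h7, mul_one]
  have hrad : (‖q * Y * q‖₊ : NNReal) ≤ 1 := by
    have h8 := hcsa.spectralRadius_eq_nnnorm
    have h9 : spectralRadius ℂ (q * Y * q) = spectralRadius ℂ w' := by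
      unfold spectralRadius
      rw [show spectrum ℂ (q * Y * q) = spectrum ℂ w' from by
        rw [hconj]; exact spectrum.units_conjugate]
    have h10 := spectrum.spectralRadius_le_nnnorm (𝕜 := ℂ) w'
    have h11 : (‖q * Y * q‖₊ : ENNReal) ≤ (‖w'‖₊ : ENNReal) := by
      rw [← h8, h9]; exact h10
    have h12 : ‖q * Y * q‖₊ ≤ ‖w'‖₊ := by exact_mod_cast h11
    refine h12.trans ?_
    exact_mod_cast hwn
  have hc1 : q * Y * q ≤ 1 := by
    refine (CStarAlgebra.norm_le_one_iff_of_nonneg _ hc0).mp ?_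
    exact_mod_cast hrad
  -- Step 3 : conjugate back
  have hYS : Y ≤ S := by
    have h13 := star_left_conjugate_le_conjugate hc1 r
    rw [hrsa.star_eq] at h13
    have h14 : r * (q * Y * q) * r = Y := by
      calc r * (q * Y * q) * r = (r * q) * Y * (q * r) := by simp only [mul_assoc]
      _ = Y := by rw [hrq, hqr, one_mul, mul_one]
    have h15 : r * 1 * r = S := by
      rw [mul_one, hr4, opPow_mul hCsp, show (1/4 + 1/4 : ℝ) = 1/2 by norm_num, ← hS]
    rwa [h14, h15] at h13
  have hXY : b * Y * b = X := by
    rw [hY,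
      show b * (bi * X * bi) * b = (b * bi) * X * (bi * b) by simp only [mul_assoc], e2, e1,
      one_mul, mul_one]
  have hfin := star_left_conjugate_le_conjugate hYS b
  rw [hbsa.star_eq, hXY] at hfin
  have hgeo : b * S * b = geomMean A B := by
    rw [hS, hC, hbi, hb]; rfl
  rwa [hgeo] at hfin

end GeomAux


namespace GeomAux

lemma geomMean_nonneg {A B : H →L[ℂ] H} (hA : StrictlyPos A) (hB : StrictlyPos B) :
    0 ≤ geomMean A B := by
  have hS : 0 ≤ opPow (opPow B (-(1/2)) * A * opPow B (-(1/2))) (1/2) :=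
    opPow_nonneg (hC_sp hA hB) _
  have := star_left_conjugate_nonneg hS (opPow B (1/2))
  rwa [(opPow_sa B (1/2)).star_eq] at this

lemma sum_strictlyPos {n : ℕ} (hn : 0 < n) {X : Fin n → H →L[ℂ] H}
    (hX : ∀ i, StrictlyPos (X i)) : StrictlyPos (∑ i, X i) :=
  ⟨Finset.sum_nonneg fun i _ => (hX i).1,
    CStarAlgebra.isUnit_of_le (X ⟨0, hn⟩)
      (Finset.single_le_sum (fun i _ => (hX i).1) (Finset.mem_univ _))
      ((hX ⟨0, hn⟩).2.isStrictlyPositive (hX ⟨0, hn⟩).1)⟩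

lemma opPow_zero_op {r : ℝ} (hr : r ≠ 0) : opPow (0 : H →L[ℂ] H) r = 0 := by
  unfold opPow
  rw [← map_zero (algebraMap ℝ (H →L[ℂ] H)), cfc_algebraMap, Real.zero_rpow hr, map_zero]

end GeomAux

end Aux

theorem stmt_8 {H : Type*} [NormedAddCommGroup H] [InnerProductSpace ℂ H] [CompleteSpace H]
    (n : ℕ) (X Y : Fin n → H →L[ℂ] H)
    (hX : ∀ i, StrictlyPos (X i)) (hY : ∀ i, StrictlyPos (Y i)) :
    ∑ i, geomMean (X i) (Y i) ≤ geomMean (∑ i, X i) (∑ i, Y i) := by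
  obtain hH | hH := subsingleton_or_nontrivial H
  · exact le_of_eq (Subsingleton.elim _ _)
  rcases Nat.eq_zero_or_pos n with rfl | hn
  · have h2 : geomMean (0 : H →L[ℂ] H) 0 = 0 := by
      rw [geomMean, GeomAux.opPow_zero_op (by norm_num : (1/2 : ℝ) ≠ 0), zero_mul, mul_zero]
    simp only [Finset.univ_eq_empty, Finset.sum_empty, h2, le_refl]
  · have hXs : StrictlyPos (∑ i, X i) := GeomAux.sum_strictlyPos hn hX
    have hYs : StrictlyPos (∑ i, Y i) := GeomAux.sum_strictlyPos hn hY
    have hsum := GeomAux.qf_sum fun i => GeomAux.qf_geomMean (hX i) (hY i)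
    have h0 : 0 ≤ ∑ i, geomMean (X i) (Y i) :=
      Finset.sum_nonneg fun i _ => GeomAux.geomMean_nonneg (hX i) (hY i)
    exact GeomAux.le_geomMean_of_qf hXs hYs h0 hsum
end
end

section
/- Let H be a complex Hilbert space, A, B, C ∈ B(H) strictly positive operators, and x ∈ H a unit vector. Then ⟨Bx, x⟩ · ⟨((A+C)/2)x, x⟩⁻¹ · ⟨Bx, x⟩ ≤ √(⟨BA⁻¹Bx, x⟩ · ⟨BC⁻¹Bx, x⟩) ≤ ⟨B((A⁻¹+C⁻¹)/2)Bx, x⟩, where all inner products are positive real numbers. -/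
noncomputable section

open MeasureTheory

universe u

section Aux2

variable {H : Type*} [NormedAddCommGroup H] [InnerProductSpace ℂ H] [CompleteSpace H]

lemma re_inner_real_smul_left {H : Type*} [NormedAddCommGroup H] [InnerProductSpace ℂ H]
    (r : ℝ) (v w : H) : (inner ℂ (r • v) w : ℂ).re = r * (inner ℂ v w : ℂ).re := by
  rw [RCLike.real_smul_eq_coe_smul (K := ℂ), inner_smul_left]
  simp

lemma cs_pos' (P : H →L[ℂ] H) (hP : P.IsPositive) (x y : H) :
    (inner ℂ (P x) y : ℂ).re ^ 2 ≤ (inner ℂ (P x) x : ℂ).re * (inner ℂ (P y) y : ℂ).re := by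
  have hsym := ContinuousLinearMap.isSelfAdjoint_iff_isSymmetric.mp hP.isSelfAdjoint
  have key : ∀ t : ℝ, 0 ≤ (inner ℂ (P y) y : ℂ).re * (t * t) +
      (2 * (inner ℂ (P x) y : ℂ).re) * t + (inner ℂ (P x) x : ℂ).re := by
    intro t
    have h0 : 0 ≤ (inner ℂ (P (x + (t : ℂ) • y)) (x + (t : ℂ) • y) : ℂ).re :=
      (Complex.le_def.mp (hP.inner_nonneg_left (x + (t : ℂ) • y))).1
    have e1 : (inner ℂ (P y) x : ℂ) = starRingEnd ℂ (inner ℂ (P x) y) := by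
      have := hsym y x
      simp only [ContinuousLinearMap.coe_coe] at this
      rw [this, ← inner_conj_symm]
    simp only [map_add, _root_.map_smul, inner_add_left, inner_add_right, inner_smul_left,
      inner_smul_right, RCLike.re_to_complex, e1] at h0
    simp only [Complex.add_re, Complex.mul_re, Complex.conj_re, Complex.conj_im,
      Complex.ofReal_re, Complex.ofReal_im] at h0
    ring_nf at h0 ⊢
    linarith
  have hd := discrim_le_zero key
  simp only [discrim] at hd
  nlinarith [hd]

-- key inequality: ⟨Bx,x⟩² ≤ ⟨Ax,x⟩ ⟨B A⁻¹ B x, x⟩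
lemma key_cs' (A B : H →L[ℂ] H) (hA0 : 0 ≤ A) (hAu : IsUnit A) (hB0 : 0 ≤ B) (x : H) :
    ((inner ℂ (B x) x : ℂ).re) ^ 2 ≤
      (inner ℂ (A x) x : ℂ).re * (inner ℂ ((B * Ring.inverse A * B) x) x : ℂ).re := by
  have hAp := (ContinuousLinearMap.nonneg_iff_isPositive A).mp hA0
  have hBp := (ContinuousLinearMap.nonneg_iff_isPositive B).mp hB0
  have hAsym := ContinuousLinearMap.isSelfAdjoint_iff_isSymmetric.mp hAp.isSelfAdjoint
  have hBsym := ContinuousLinearMap.isSelfAdjoint_iff_isSymmetric.mp hBp.isSelfAdjoint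
  set z := Ring.inverse A (B x) with hzdef
  have hz : A z = B x := by
    rw [hzdef, ← ContinuousLinearMap.mul_apply, Ring.mul_inverse_cancel A hAu,
      ContinuousLinearMap.one_apply]
  have h1 : (inner ℂ (A x) z : ℂ).re = (inner ℂ (B x) x : ℂ).re := by
    have := hAsym x z
    simp only [ContinuousLinearMap.coe_coe] at this
    rw [this, hz, ← inner_conj_symm, Complex.conj_re]
  have h2 : (inner ℂ (A z) z : ℂ).re = (inner ℂ ((B * Ring.inverse A * B) x) x : ℂ).re := by
    have hmul : (B * Ring.inverse A * B) x = B z := by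
      simp [ContinuousLinearMap.mul_apply, hzdef]
    rw [hmul]
    have := hBsym z x
    simp only [ContinuousLinearMap.coe_coe] at this
    rw [this, hz, ← inner_conj_symm (B x) z, Complex.conj_re]
  have := cs_pos' A hAp x z
  rw [h1, h2] at this
  exact this

lemma rIP_pos' (A : H →L[ℂ] H) (hA0 : 0 ≤ A) (hAu : IsUnit A) (x : H) (hx : ‖x‖ = 1) :
    0 < (inner ℂ (A x) x : ℂ).re := by
  have hAp := (ContinuousLinearMap.nonneg_iff_isPositive A).mp hA0
  have hAsym := ContinuousLinearMap.isSelfAdjoint_iff_isSymmetric.mp hAp.isSelfAdjoint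
  set z := Ring.inverse A x with hzdef
  have hz : A z = x := by
    rw [hzdef, ← ContinuousLinearMap.mul_apply, Ring.mul_inverse_cancel A hAu,
      ContinuousLinearMap.one_apply]
  have h1 : (inner ℂ (A x) z : ℂ).re = 1 := by
    have := hAsym x z
    simp only [ContinuousLinearMap.coe_coe] at this
    rw [this, hz]
    have : (inner ℂ x x : ℂ) = (‖x‖ : ℂ) ^ 2 := inner_self_eq_norm_sq_to_K x
    rw [this, hx]
    norm_num
  have hcs := cs_pos' A hAp x z
  rw [h1] at hcs
  have hnn : 0 ≤ (inner ℂ (A x) x : ℂ).re := (Complex.le_def.mp (hAp.inner_nonneg_left x)).1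
  rcases hnn.lt_or_eq with h | h
  · exact h
  · rw [← h, zero_mul] at hcs
    norm_num at hcs

end Aux2

set_option synthInstance.maxHeartbeats 1000000 in
theorem stmt_18 {H : Type*} [NormedAddCommGroup H] [InnerProductSpace ℂ H] [CompleteSpace H]
    (A B C : H →L[ℂ] H) (hA : StrictlyPos A) (hB : StrictlyPos B) (hC : StrictlyPos C)
    (x : H) (hx : ‖x‖ = 1) :
    rIP B x * (rIP (arithMean A C) x)⁻¹ * rIP B x ≤
      Real.sqrt (rIP (B * Ring.inverse A * B) x * rIP (B * Ring.inverse C * B) x) ∧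
      Real.sqrt (rIP (B * Ring.inverse A * B) x * rIP (B * Ring.inverse C * B) x) ≤
        rIP (B * ((2 : ℝ)⁻¹ • (Ring.inverse A + Ring.inverse C)) * B) x := by
  obtain ⟨hA0, hAu⟩ := hA
  obtain ⟨hB0, hBu⟩ := hB
  obtain ⟨hC0, hCu⟩ := hC
  have hα : 0 < rIP A x := rIP_pos' A hA0 hAu x hx
  have hγ : 0 < rIP C x := rIP_pos' C hC0 hCu x hx
  have hb : 0 ≤ rIP B x :=
    (Complex.le_def.mp (((ContinuousLinearMap.nonneg_iff_isPositive B).mp hB0).inner_nonneg_left x)).1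
  have h1 : rIP B x ^ 2 ≤ rIP A x * rIP (B * Ring.inverse A * B) x := key_cs' A B hA0 hAu hB0 x
  have h2 : rIP B x ^ 2 ≤ rIP C x * rIP (B * Ring.inverse C * B) x := key_cs' C B hC0 hCu hB0 x
  have hmean : rIP (arithMean A C) x = 2⁻¹ * (rIP A x + rIP C x) := by
    simp [rIP, arithMean, ContinuousLinearMap.smul_apply, ContinuousLinearMap.add_apply,
      re_inner_real_smul_left, inner_add_left, Complex.add_re]
    ring
  have hright : rIP (B * ((2 : ℝ)⁻¹ • (Ring.inverse A + Ring.inverse C)) * B) x =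
      2⁻¹ * (rIP (B * Ring.inverse A * B) x + rIP (B * Ring.inverse C * B) x) := by
    simp [rIP, ContinuousLinearMap.mul_apply, ContinuousLinearMap.smul_apply,
      ContinuousLinearMap.add_apply, ContinuousLinearMap.map_smul_of_tower, map_add,
      re_inner_real_smul_left, inner_add_left, Complex.add_re]
    ring
  set α := rIP A x
  set γ := rIP C x
  set b := rIP B x
  set a := rIP (B * Ring.inverse A * B) x
  set c := rIP (B * Ring.inverse C * B) x
  have ha : 0 ≤ a := by nlinarith [sq_nonneg b]
  have hc : 0 ≤ c := by nlinarith [sq_nonneg b]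
  have hs : 0 < α + γ := by linarith
  constructor
  · rw [hmean]
    rw [Real.le_sqrt (by positivity) (by positivity)]
    rw [show b * (2⁻¹ * (α + γ))⁻¹ * b = 2 * b ^ 2 / (α + γ) by field_simp]
    rw [div_pow, div_le_iff₀ (by positivity)]
    nlinarith [mul_le_mul h1 h2 (sq_nonneg b) (mul_nonneg hα.le ha), sq_nonneg (α - γ),
      mul_nonneg ha hc, sq_nonneg b]
  · rw [hright]
    have hle : Real.sqrt (a * c) ≤ Real.sqrt ((2⁻¹ * (a + c)) ^ 2) :=
      Real.sqrt_le_sqrt (by nlinarith [sq_nonneg (a - c)])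
    rwa [Real.sqrt_sq (by positivity)] at hle
end
end
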